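/- arXiv:2302.12342 — 3 statements merged into one kernel-verified Lean document; each statement's English description precedes it below -/
import Mathlib

section
/- Blichfeldt's theorem in dimension 2: if B ⊆ ℝ² is Lebesgue measurable with Leb(B) > k for a positive integer k, then there exist k+1 points x₀, …, x_k in B such that x_i − x₀ ∈ ℤ² for every i = 1, …, k. -/
open MeasureTheory

namespace BlichfeldtAux

noncomputable abbrev E := EuclideanSpace ℝ (Fin 2)

/-- The integer vector `v` as a point of `E`. -/
noncomputable def tv (v : Fin 2 → ℤ) : E := (WithLp.equiv 2 (Fin 2 → ℝ)).symm fun j => (v j : ℝ)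

lemma tv_apply (v : Fin 2 → ℤ) (j : Fin 2) : tv v j = (v j : ℝ) := rfl

lemma tv_injective : Function.Injective tv := by
  intro v w h
  funext j
  have : (v j : ℝ) = (w j : ℝ) := by
    have := congrArg (fun x : E => x j) h
    simpa [tv_apply] using this
  exact_mod_cast this

/-- The set of points whose floor vector is `v`. -/
def D (v : Fin 2 → ℤ) : Set E := {x : E | ∀ j, ⌊x j⌋ = v j}

lemma measurable_apply (j : Fin 2) : Measurable fun x : E => x j := by
  exact (measurable_pi_apply j).comp (MeasurableEquiv.toLp 2 (Fin 2 → ℝ)).symm.measurable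

lemma measurableSet_D (v : Fin 2 → ℤ) : MeasurableSet (D v) := by
  have : D v = ⋂ j, {x : E | ⌊x j⌋ = v j} := by
    ext x; simp [D, Set.mem_iInter]
  rw [this]
  refine MeasurableSet.iInter fun j => ?_
  have h2 : {x : E | ⌊x j⌋ = v j} = (fun x : E => x j) ⁻¹' Set.Ico ((v j : ℝ)) (v j + 1) := by
    ext x; simp [Int.floor_eq_iff, Set.mem_Ico]
  rw [h2]
  exact measurable_apply j measurableSet_Ico

lemma mem_D_iff (v : Fin 2 → ℤ) (x : E) :
    x ∈ D v ↔ ∀ j, x j ∈ Set.Ico (v j : ℝ) (v j + 1) := by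
  constructor
  · intro h j
    have := h j
    constructor
    · exact (this ▸ Int.floor_le (x j))
    · have := Int.lt_floor_add_one (x j)
      rw [h j] at this; exact_mod_cast this
  · intro h j
    exact Int.floor_eq_iff.mpr ⟨(h j).1, (h j).2⟩

lemma D_cover (x : E) : x ∈ D fun j => ⌊x j⌋ := fun _ => rfl

lemma D_disjoint : Pairwise (Function.onFun Disjoint fun v => D v) := by
  intro v w hvw
  rw [Function.onFun, Set.disjoint_left]
  intro x hxv hxw
  exact hvw (funext fun j => (hxv j).symm.trans (hxw j))

lemma volume_D_zero : volume (D 0) = 1 := by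
  have h : D 0 = (MeasurableEquiv.toLp 2 (Fin 2 → ℝ)).symm ⁻¹'
      (Set.univ.pi fun _ : Fin 2 => Set.Ico (0 : ℝ) 1) := by
    ext x
    simp only [Set.mem_preimage, Set.mem_pi, Set.mem_univ, forall_true_left, true_implies]
    rw [mem_D_iff]
    constructor
    · intro hh j
      have := hh j
      simpa using this
    · intro hh j
      have := hh j
      simpa using this
  rw [h, (EuclideanSpace.volume_preserving_symm_measurableEquiv_toLp (Fin 2)).measure_preimage
    (MeasurableSet.univ_pi fun _ => measurableSet_Ico).nullMeasurableSet]
  rw [volume_pi_pi]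
  simp [Real.volume_Ico]

end BlichfeldtAux

open BlichfeldtAux in
/-- Blichfeldt's theorem in dimension 2: a measurable set of Lebesgue measure
greater than `k` contains `k+1` pairwise distinct points lying in a single coset
of `ℤ²`. -/
theorem stmt_1 (k : ℕ) (hk : 1 ≤ k) (B : Set (EuclideanSpace ℝ (Fin 2)))
    (hB : MeasurableSet B) (hvol : (k : ENNReal) < volume B) :
    ∃ x : Fin (k + 1) → EuclideanSpace ℝ (Fin 2),
      Function.Injective x ∧ (∀ i, x i ∈ B) ∧
      ∀ i, ∃ v : Fin 2 → ℤ, ∀ j, (x i - x 0) j = (v j : ℝ) := by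
  classical
  -- the pieces of `B` translated back into the fundamental cube `D 0`
  set s : (Fin 2 → ℤ) → Set E := fun v => D 0 ∩ ((fun x : E => x + tv v) ⁻¹' B) with hs
  have hs_meas : ∀ v, MeasurableSet (s v) := fun v =>
    (measurableSet_D 0).inter ((measurable_add_const (tv v)) hB)
  have hs_sub : ∀ v, s v ⊆ D 0 := fun v => Set.inter_subset_left
  -- translate identification: `s v` is the translate of `B ∩ D v`
  have hsv : ∀ v, s v = (fun x : E => x + tv v) ⁻¹' (B ∩ D v) := by
    intro v
    ext x
    simp only [hs, Set.mem_inter_iff, Set.mem_preimage]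
    constructor
    · rintro ⟨h0, hb⟩
      refine ⟨hb, fun j => ?_⟩
      have : (x + tv v) j = x j + (v j : ℝ) := by
        simp [PiLp.add_apply, tv_apply]
      have h0j : ⌊x j⌋ = 0 := h0 j
      rw [this, Int.floor_add_intCast, h0j, zero_add]
    · rintro ⟨hb, hd⟩
      refine ⟨fun j => ?_, hb⟩
      have : (x + tv v) j = x j + (v j : ℝ) := by
        simp [PiLp.add_apply, tv_apply]
      have h2 := hd j
      rw [this, Int.floor_add_intCast] at h2
      show ⌊x j⌋ = 0
      omega
  have hvol_s : ∀ v, volume (s v) = volume (B ∩ D v) := by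
    intro v
    rw [hsv v]
    exact measure_preimage_add_right volume (tv v) _
  -- decomposition of the measure of `B`
  have hBdec : volume B = ∑' v : Fin 2 → ℤ, volume (B ∩ D v) := by
    have hcov : B = ⋃ v : Fin 2 → ℤ, B ∩ D v := by
      ext x
      simp only [Set.mem_iUnion, Set.mem_inter_iff]
      exact ⟨fun hx => ⟨fun j => ⌊x j⌋, hx, D_cover x⟩, fun ⟨v, hx, _⟩ => hx⟩
    conv_lhs => rw [hcov]
    rw [measure_iUnion
      (fun v w hvw => ((D_disjoint hvw).mono Set.inter_subset_right Set.inter_subset_right))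
      (fun v => hB.inter (measurableSet_D v))]
  have hsum : (k : ENNReal) < ∑' v : Fin 2 → ℤ, volume (s v) := by
    rw [show (∑' v : Fin 2 → ℤ, volume (s v)) = volume B by
      simp_rw [hvol_s]; exact hBdec.symm]
    exact hvol
  -- pigeonhole: some point lies in more than `k` of the sets `s v`
  have key : ∃ x : E, (k : ENNReal) < ∑' v : Fin 2 → ℤ, (s v).indicator 1 x := by
    by_contra hcon
    push_neg at hcon
    have hbound : ∀ x : E, (∑' v : Fin 2 → ℤ, (s v).indicator 1 x)
        ≤ (D 0).indicator (fun _ => (k : ENNReal)) x := by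
      intro x
      by_cases hx : x ∈ D 0
      · rw [Set.indicator_of_mem hx]
        exact hcon x
      · rw [Set.indicator_of_notMem hx]
        have : ∀ v : Fin 2 → ℤ, (s v).indicator (1 : E → ENNReal) x = 0 := fun v =>
          Set.indicator_of_notMem (fun h => hx (hs_sub v h)) _
        simp [this]
    have h1 : (∑' v : Fin 2 → ℤ, volume (s v))
        = ∫⁻ x, ∑' v : Fin 2 → ℤ, (s v).indicator 1 x := by
      rw [lintegral_tsum fun v => ((measurable_one.indicator (hs_meas v)).aemeasurable)]
      congr 1
      funext v
      exact (lintegral_indicator_one (hs_meas v)).symm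
    have h2 : (∑' v : Fin 2 → ℤ, volume (s v)) ≤ (k : ENNReal) := by
      rw [h1]
      calc ∫⁻ x, ∑' v : Fin 2 → ℤ, (s v).indicator 1 x
          ≤ ∫⁻ x, (D 0).indicator (fun _ => (k : ENNReal)) x := lintegral_mono hbound
        _ = (k : ENNReal) * volume (D 0) := lintegral_indicator_const (measurableSet_D 0) _
        _ = (k : ENNReal) := by rw [volume_D_zero, mul_one]
    exact absurd hsum (not_lt.mpr h2)
  obtain ⟨x, hx⟩ := key
  -- the set of lattice vectors `v` with `x ∈ s v` has more than `k` elements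
  set T : Set (Fin 2 → ℤ) := {v | x ∈ s v} with hT
  have hpt : ∀ v, (s v).indicator (1 : E → ENNReal) x = T.indicator (fun _ => (1 : ENNReal)) v := by
    intro v
    by_cases hv : x ∈ s v
    · rw [Set.indicator_of_mem hv, Set.indicator_of_mem (show v ∈ T from hv)]
      rfl
    · rw [Set.indicator_of_notMem hv, Set.indicator_of_notMem (show v ∉ T from hv)]
  have hx' : (k : ENNReal) < ∑' v : Fin 2 → ℤ, T.indicator (fun _ => (1 : ENNReal)) v := by
    rwa [tsum_congr hpt] at hx
  have hF : ∃ F : Finset (Fin 2 → ℤ), ↑F ⊆ T ∧ F.card = k + 1 := by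
    by_cases hfin : T.Finite
    · have : (∑' v : Fin 2 → ℤ, T.indicator (fun _ => (1 : ENNReal)) v)
          = (hfin.toFinset.card : ENNReal) := by
        rw [tsum_eq_sum (s := hfin.toFinset)
          (fun v hv => Set.indicator_of_notMem (by simpa using hv) _)]
        rw [Finset.sum_congr rfl fun v hv =>
          Set.indicator_of_mem (by simpa using hv) (fun _ => (1 : ENNReal))]
        simp
      rw [this] at hx'
      have hcard : k + 1 ≤ hfin.toFinset.card := by exact_mod_cast hx'
      obtain ⟨F, hFsub, hFcard⟩ := Finset.exists_subset_card_eq hcard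
      exact ⟨F, by intro v hv; simpa using hFsub hv, hFcard⟩
    · obtain ⟨F, hFsub, hFcard⟩ := Set.Infinite.exists_subset_card_eq hfin (k + 1)
      exact ⟨F, hFsub, hFcard⟩
  obtain ⟨F, hFsub, hFcard⟩ := hF
  -- extract the `k+1` points
  let e := F.equivFinOfCardEq hFcard
  let g : Fin (k + 1) → (Fin 2 → ℤ) := fun i => (e.symm i : Fin 2 → ℤ)
  have hg_inj : Function.Injective g := fun i i' h =>
    e.symm.injective (Subtype.ext h)
  have hg_mem : ∀ i, g i ∈ T := fun i => hFsub (e.symm i).2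
  refine ⟨fun i => x + tv (g i), ?_, ?_, ?_⟩
  · intro i i' h
    exact hg_inj (tv_injective (by
      have := add_left_cancel h
      exact this))
  · intro i
    exact (hg_mem i).2
  · intro i
    refine ⟨fun j => g i j - g 0 j, fun j => ?_⟩
    have h1 : (x + tv (g i) - (x + tv (g 0))) = tv (g i) - tv (g 0) := by abel
    rw [h1]
    have : (tv (g i) - tv (g 0)) j = (g i j : ℝ) - (g 0 j : ℝ) := by
      simp [PiLp.sub_apply, tv_apply]
    rw [this]
    push_cast
    ring
end

section
/- Let 0 < ε < 1/6 and define J(x,y) = (5 + cos(2πx)) · (2 − (1+ε) cos²(πx) cos(2πy)). Then J(x,y) > 5 for all (x,y) ∈ ℝ². -/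
open Real

/-- For `0 < ε < 1/6`, the Jacobian
`J(x,y) = (5 + cos(2πx))(2 − (1+ε)cos²(πx)cos(2πy))` is everywhere `> 5`. -/
theorem stmt_11 (ε : ℝ) (hε0 : 0 < ε) (hε : ε < 1 / 6) (x y : ℝ) :
    5 < (5 + Real.cos (2 * π * x)) *
        (2 - (1 + ε) * Real.cos (π * x) ^ 2 * Real.cos (2 * π * y)) := by
  have h1 : Real.cos (π * x) ^ 2 = 1 / 2 + Real.cos (2 * π * x) / 2 := by
    rw [Real.cos_sq]; ring_nf
  rw [h1]
  set c := Real.cos (2 * π * x) with hc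
  set d := Real.cos (2 * π * y) with hd
  have hc1 : -1 ≤ c := Real.neg_one_le_cos _
  have hc2 : c ≤ 1 := Real.cos_le_one _
  have hd1 : -1 ≤ d := Real.neg_one_le_cos _
  have hd2 : d ≤ 1 := Real.cos_le_one _
  nlinarith [mul_nonneg (by linarith : (0:ℝ) ≤ 1 + c) (by linarith : (0:ℝ) ≤ 1 - d),
    mul_nonneg (by linarith : (0:ℝ) ≤ 1 + c) (by linarith : (0:ℝ) ≤ 1 - c),
    mul_nonneg (mul_nonneg (by linarith : (0:ℝ) ≤ 1 + c) (by linarith : (0:ℝ) ≤ 1 - d)) hε0.le,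
    mul_nonneg (mul_nonneg (by linarith : (0:ℝ) ≤ 1 + c) (by linarith : (0:ℝ) ≤ 1 - c)) hε0.le,
    mul_nonneg (mul_nonneg (by linarith : (0:ℝ) ≤ 5 + c) (by linarith : (0:ℝ) ≤ 1 + c)) (by linarith : (0:ℝ) ≤ 1 - d)]
end

section
/- With f and ε < 1 as above, the cone S = {(v₁,v₂) ∈ ℝ²∖{0} : |v₁| ≥ |v₂|} satisfies Df_p(S) ⊆ interior(S) ∪ {0} at every point p, and ‖Df_p(v)‖ ≥ 2√2 ‖v‖ for every v ∈ S; hence f is partially hyperbolic. -/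
open Real
set_option maxHeartbeats 1000000

private lemma cs_trig (s1 c1 s2 c2 : ℝ) (h1 : s1^2 + c1^2 = 1) (h2 : s2^2 + c2^2 = 1) :
    |s1| * |s2| + |c1| * |c2| ≤ 1 := by
  nlinarith [sq_nonneg (|s1| - |s2|), sq_nonneg (|c1| - |c2|), sq_abs s1, sq_abs c1,
    sq_abs s2, sq_abs c2]

/-- The cone `S = {v ≠ 0 : |v₁| ≥ |v₂|}` is mapped by `Df_p` into its interior
(plus `0`) and vectors in `S` are expanded (in the Euclidean norm) by a factor
of at least `2√2`; hence `f` is partially hyperbolic. -/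
theorem stmt_13 (ε : ℝ) (hε0 : 0 < ε) (hε1 : ε < 1) :
    let f : ℝ × ℝ → ℝ × ℝ := fun p =>
      (5 * p.1 + Real.sin (2 * π * p.1) / (2 * π),
       2 * p.2 - (1 + ε) * Real.cos (π * p.1) ^ 2 * Real.sin (2 * π * p.2) / (2 * π))
    let S : Set (ℝ × ℝ) := {v | v ≠ 0 ∧ |v.2| ≤ |v.1|}
    ∀ p : ℝ × ℝ, ∀ v ∈ S,
      (fderiv ℝ f p v ∈ interior S ∪ {0}) ∧
      2 * Real.sqrt 2 * Real.sqrt (v.1 ^ 2 + v.2 ^ 2) ≤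
        Real.sqrt ((fderiv ℝ f p v).1 ^ 2 + (fderiv ℝ f p v).2 ^ 2) := by
  intro f S p v hv
  obtain ⟨x, y⟩ := p
  obtain ⟨hv0, hvle⟩ := hv
  have hs : v.1 ≠ 0 := by
    intro h
    apply hv0
    have h2 : |v.2| ≤ 0 := by simpa [h] using hvle
    have h2' : v.2 = 0 := abs_eq_zero.mp (le_antisymm h2 (abs_nonneg _))
    exact Prod.ext_iff.mpr ⟨h, h2'⟩
  have hs' : 0 < |v.1| := abs_pos.mpr hs
  have hπ : (π : ℝ) ≠ 0 := Real.pi_ne_zero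
  -- The derivative
  have hder : HasFDerivAt f
      (((5 + Real.cos (2*π*x)) • (ContinuousLinearMap.fst ℝ ℝ ℝ)).prod
        ((((1+ε) * (Real.sin (π*x) * Real.cos (π*x)) * Real.sin (2*π*y)) • (ContinuousLinearMap.fst ℝ ℝ ℝ)) +
         ((2 - (1+ε) * Real.cos (π*x)^2 * Real.cos (2*π*y)) • (ContinuousLinearMap.snd ℝ ℝ ℝ)))) (x, y) := by
    have h1 : HasDerivAt (fun t : ℝ => 5 * t + Real.sin (2 * π * t) / (2 * π)) (5 + Real.cos (2*π*x)) x := by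
      have ha : HasDerivAt (fun t : ℝ => 2 * π * t) (2 * π) x := by
        simpa using (hasDerivAt_id x).const_mul (2*π)
      have hb : HasDerivAt (fun t : ℝ => Real.sin (2*π*t)) (Real.cos (2*π*x) * (2*π)) x :=
        (Real.hasDerivAt_sin _).comp x ha
      have := ((hasDerivAt_id x).const_mul 5).add (hb.div_const (2*π))
      have e : (5:ℝ) * 1 + Real.cos (2*π*x) * (2*π) / (2*π) = 5 + Real.cos (2*π*x) := by
        field_simp
      rw [e] at this
      exact this
    have hf1 : HasFDerivAt (fun p : ℝ × ℝ => 5 * p.1 + Real.sin (2 * π * p.1) / (2 * π))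
        ((5 + Real.cos (2*π*x)) • (ContinuousLinearMap.fst ℝ ℝ ℝ)) (x, y) :=
      h1.comp_hasFDerivAt (f := fun p : ℝ × ℝ => p.1) (x, y) (hasFDerivAt_fst)
    have hcx : HasDerivAt (fun t : ℝ => Real.cos (π * t)) (-Real.sin (π*x) * π) x := by
      have ha : HasDerivAt (fun t : ℝ => π * t) π x := by
        simpa using (hasDerivAt_id x).const_mul π
      exact (Real.hasDerivAt_cos _).comp x ha
    have hg : HasDerivAt (fun t : ℝ => (1+ε) * Real.cos (π*t)^2)
        ((1+ε) * (2 * Real.cos (π*x) ^ 1 * (-Real.sin (π*x) * π))) x := (hcx.pow 2).const_mul (1+ε)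
    have hA : HasFDerivAt (fun p : ℝ × ℝ => (1+ε) * Real.cos (π * p.1)^2)
        (((1+ε) * (2 * Real.cos (π*x) ^ 1 * (-Real.sin (π*x) * π))) • (ContinuousLinearMap.fst ℝ ℝ ℝ)) (x, y) :=
      hg.comp_hasFDerivAt (f := fun p : ℝ × ℝ => p.1) (x, y) (hasFDerivAt_fst)
    have hcy : HasDerivAt (fun t : ℝ => 2 * π * t) (2 * π) y := by
      simpa using (hasDerivAt_id y).const_mul (2*π)
    have hB : HasFDerivAt (fun p : ℝ × ℝ => Real.sin (2 * π * p.2))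
        ((Real.cos (2*π*y) * (2*π)) • (ContinuousLinearMap.snd ℝ ℝ ℝ)) (x, y) :=
      ((Real.hasDerivAt_sin _).comp y hcy).comp_hasFDerivAt (f := fun p : ℝ × ℝ => p.2) (x, y) (hasFDerivAt_snd)
    have h2y : HasFDerivAt (fun p : ℝ × ℝ => 2 * p.2)
        ((2 : ℝ) • (ContinuousLinearMap.snd ℝ ℝ ℝ)) (x, y) :=
      (hasFDerivAt_snd).const_mul 2
    have hf2raw := h2y.sub ((hA.mul hB).const_mul ((2*π)⁻¹))
    have hf2 : HasFDerivAt (fun p : ℝ × ℝ =>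
        2 * p.2 - (1 + ε) * Real.cos (π * p.1) ^ 2 * Real.sin (2 * π * p.2) / (2 * π))
        ((((1+ε) * (Real.sin (π*x) * Real.cos (π*x)) * Real.sin (2*π*y)) • (ContinuousLinearMap.fst ℝ ℝ ℝ)) +
         ((2 - (1+ε) * Real.cos (π*x)^2 * Real.cos (2*π*y)) • (ContinuousLinearMap.snd ℝ ℝ ℝ))) (x, y) := by
      refine HasFDerivAt.congr_of_eventuallyEq (hf2raw.congr_fderiv ?_) (Filter.Eventually.of_forall fun p => ?_)
      · refine ContinuousLinearMap.ext fun v => ?_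
        simp [ContinuousLinearMap.smul_apply, ContinuousLinearMap.add_apply,
          ContinuousLinearMap.sub_apply]
        field_simp
        ring
      · simp only [Pi.sub_apply, Pi.mul_apply]
        ring
    exact hf1.prodMk hf2
  set a := 5 + Real.cos (2*π*x) with ha_def
  set b := (1+ε) * (Real.sin (π*x) * Real.cos (π*x)) * Real.sin (2*π*y) with hb_def
  set c := 2 - (1+ε) * Real.cos (π*x)^2 * Real.cos (2*π*y) with hc_def
  have h1 : (fderiv ℝ f (x, y) v).1 = a * v.1 := by
    rw [hder.fderiv]; simp
  have h2 : (fderiv ℝ f (x, y) v).2 = b * v.1 + c * v.2 := by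
    rw [hder.fderiv]; simp
  -- bounds
  have ha4 : 4 ≤ a := by
    have := Real.neg_one_le_cos (2*π*x)
    rw [ha_def]; linarith
  have hu1 : 4 * |v.1| ≤ |a * v.1| := by
    rw [abs_mul, abs_of_nonneg (by linarith : (0:ℝ) ≤ a)]
    exact mul_le_mul_of_nonneg_right ha4 (abs_nonneg _)
  have hkey : |b * v.1 + c * v.2| ≤ (3 + ε) * |v.1| := by
    set s1 := Real.sin (π*x); set c1 := Real.cos (π*x)
    set s2 := Real.sin (2*π*y); set c2 := Real.cos (2*π*y)
    have e1 : s1^2 + c1^2 = 1 := Real.sin_sq_add_cos_sq _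
    have e2 : s2^2 + c2^2 = 1 := Real.sin_sq_add_cos_sq _
    have hcs : |s1| * |s2| + |c1| * |c2| ≤ 1 := cs_trig s1 c1 s2 c2 e1 e2
    have hc1 : |c1| ≤ 1 := Real.abs_cos_le_one _
    have hrw : b * v.1 + c * v.2 = 2 * v.2 + (1+ε) * (c1 * (s1 * s2 * v.1 - c1 * c2 * v.2)) := by
      rw [hb_def, hc_def]; ring
    rw [hrw]
    have hin : |s1 * s2 * v.1 - c1 * c2 * v.2| ≤ |v.1| := by
      calc |s1 * s2 * v.1 - c1 * c2 * v.2| ≤ |s1 * s2 * v.1| + |c1 * c2 * v.2| := abs_sub _ _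
        _ = |s1| * |s2| * |v.1| + |c1| * |c2| * |v.2| := by rw [abs_mul, abs_mul, abs_mul, abs_mul]
        _ ≤ |s1| * |s2| * |v.1| + |c1| * |c2| * |v.1| := by
            have h := mul_le_mul_of_nonneg_left hvle (mul_nonneg (abs_nonneg c1) (abs_nonneg c2))
            linarith
        _ = (|s1| * |s2| + |c1| * |c2|) * |v.1| := by ring
        _ ≤ 1 * |v.1| := mul_le_mul_of_nonneg_right hcs (abs_nonneg _)
        _ = |v.1| := one_mul _
    calc |2 * v.2 + (1+ε) * (c1 * (s1 * s2 * v.1 - c1 * c2 * v.2))|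
        ≤ |2 * v.2| + |(1+ε) * (c1 * (s1 * s2 * v.1 - c1 * c2 * v.2))| := abs_add_le _ _
      _ = 2 * |v.2| + (1+ε) * (|c1| * |s1 * s2 * v.1 - c1 * c2 * v.2|) := by
          rw [abs_mul, abs_mul, abs_mul, abs_of_nonneg (by norm_num : (0:ℝ) ≤ (2:ℝ)),
            abs_of_nonneg (by linarith : (0:ℝ) ≤ 1 + ε)]
      _ ≤ 2 * |v.1| + (1+ε) * (1 * |v.1|) := by
          have hq : |c1| * |s1 * s2 * v.1 - c1 * c2 * v.2| ≤ 1 * |v.1| :=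
            mul_le_mul hc1 hin (abs_nonneg _) (by norm_num)
          have h2q := mul_le_mul_of_nonneg_left hq (by linarith : (0:ℝ) ≤ 1 + ε)
          linarith
      _ = (3 + ε) * |v.1| := by ring
  have hlt : |b * v.1 + c * v.2| < |a * v.1| := by
    have : (3 + ε) * |v.1| < 4 * |v.1| := by
      have := mul_lt_mul_of_pos_right (by linarith : (3:ℝ) + ε < 4) hs'
      linarith
    linarith
  constructor
  · left
    have hopen : IsOpen {w : ℝ × ℝ | |w.2| < |w.1|} :=
      isOpen_lt (continuous_snd.abs) (continuous_fst.abs)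
    have hsub : {w : ℝ × ℝ | |w.2| < |w.1|} ⊆ S := by
      intro w hw
      refine ⟨?_, le_of_lt hw⟩
      intro h0
      rw [h0] at hw
      simp at hw
    apply interior_maximal hsub hopen
    show |(fderiv ℝ f (x, y) v).2| < |(fderiv ℝ f (x, y) v).1|
    rw [h1, h2]; exact hlt
  · rw [h1, h2]
    have hL : 2 * Real.sqrt 2 * Real.sqrt (v.1 ^ 2 + v.2 ^ 2) ≤ 4 * |v.1| := by
      have hsq : v.2 ^ 2 ≤ v.1 ^ 2 := by
        rw [← sq_abs v.1, ← sq_abs v.2]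
        exact pow_le_pow_left₀ (abs_nonneg _) hvle 2
      have h1' : Real.sqrt (v.1 ^ 2 + v.2 ^ 2) ≤ Real.sqrt (2 * v.1 ^ 2) :=
        Real.sqrt_le_sqrt (by linarith)
      have h2' : Real.sqrt (2 * v.1 ^ 2) = Real.sqrt 2 * |v.1| := by
        rw [Real.sqrt_mul (by norm_num), Real.sqrt_sq_eq_abs]
      have h3' : Real.sqrt 2 * Real.sqrt 2 = 2 := Real.mul_self_sqrt (by norm_num)
      have hs2 : (0:ℝ) < Real.sqrt 2 := Real.sqrt_pos.mpr (by norm_num)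
      calc 2 * Real.sqrt 2 * Real.sqrt (v.1 ^ 2 + v.2 ^ 2)
          ≤ 2 * Real.sqrt 2 * (Real.sqrt 2 * |v.1|) := by
            rw [← h2']
            exact mul_le_mul_of_nonneg_left h1' (by positivity)
        _ = 2 * (Real.sqrt 2 * Real.sqrt 2) * |v.1| := by ring
        _ = 4 * |v.1| := by rw [h3']; ring
    have hR : 4 * |v.1| ≤ Real.sqrt ((a * v.1) ^ 2 + (b * v.1 + c * v.2) ^ 2) := by
      have h1' : |a * v.1| = Real.sqrt ((a * v.1) ^ 2) := (Real.sqrt_sq_eq_abs _).symm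
      have h2' : Real.sqrt ((a * v.1) ^ 2) ≤ Real.sqrt ((a * v.1) ^ 2 + (b * v.1 + c * v.2) ^ 2) :=
        Real.sqrt_le_sqrt (by nlinarith [sq_nonneg (b * v.1 + c * v.2)])
      calc 4 * |v.1| ≤ |a * v.1| := hu1
        _ = _ := h1'
        _ ≤ _ := h2'
    linarith
end
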